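/- Fix a positive integer n and real coefficients c_α for each α ⊆ {1,…,n}, and suppose that ∑_{α⊆{1,…,n}} c_α · dim⟨U_i : i∈α⟩ ≥ 0 holds for every choice of subspaces U_1,…,U_n of every finite-dimensional vector space over every finite field (i.e., the inequality is a valid subspace rank inequality in n variables). Suppose further that on an n-element ground set Y, every rank function in the closure of the convex cone generated by Υ[Y] is almost representable. Then for every finite ground set X, every cc-representable polymatroid h on X, every 0 ≤ ε ≤ h(X), and every choice of subsets V_1,…,V_n ⊆ X, the ε-perturbation g of h (defined by g(A) := min(h(A), h(X) − ε)) satisfies ∑_{α⊆{1,…,n}} c_α · g(⋃_{i∈α} V_i) ≥ 0. -/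

import Mathlib

open Module Filter Topology

/-- A representation of a rank function on ground set `X` by subspaces of a
finite-dimensional vector space `W` over a finite field `F`. -/
structure SubspaceRep {X : Type} (h : Finset X → ℝ) where
  F : Type
  W : Type
  [fieldF : Field F]
  [fintypeF : Fintype F]
  [addCommGroupW : AddCommGroup W]
  [moduleW : Module F W]
  [finiteDimensionalW : FiniteDimensional F W]
  V : X → Submodule F W
  rank_eq : ∀ A : Finset X, h A = (Module.finrank F ↥(A.sup V) : ℝ)

/-- `h` is representable: it is `q`-representable for some prime power `q`
(equivalently, it is given by subspace dimensions over some finite field). -/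
def IsRepresentable {X : Type} (h : Finset X → ℝ) : Prop := Nonempty (SubspaceRep h)

/-- `h` is even representable: `2^m`-representable for some positive integer `m`. -/
def EvenRepresentable {X : Type} (h : Finset X → ℝ) : Prop :=
  ∃ (r : SubspaceRep h) (m : ℕ), 0 < m ∧ Nat.card r.F = 2 ^ m

/-- `h` is odd representable: `p^m`-representable for some odd prime `p` and positive `m`. -/
def OddRepresentable {X : Type} (h : Finset X → ℝ) : Prop :=
  ∃ (r : SubspaceRep h) (p m : ℕ), p.Prime ∧ Odd p ∧ 0 < m ∧ Nat.card r.F = p ^ m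

/-- Polymatroid axioms: normalization, nonnegativity, monotonicity, submodularity. -/
def IsPolymatroid {X : Type} [DecidableEq X] (h : Finset X → ℝ) : Prop :=
  h ∅ = 0 ∧ (∀ A, 0 ≤ h A) ∧ (∀ A B : Finset X, A ⊆ B → h A ≤ h B) ∧
    ∀ A B : Finset X, h (A ∪ B) + h (A ∩ B) ≤ h A + h B

/-- The Ingleton expression `J_h(A1,A2,A3,A4)`. -/
noncomputable def ingletonJ {X : Type} [DecidableEq X] (h : Finset X → ℝ)
    (A1 A2 A3 A4 : Finset X) : ℝ :=
  h (A1 ∪ A2) + h (A1 ∪ A3) + h (A1 ∪ A4) + h (A2 ∪ A3) + h (A2 ∪ A4)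
    - h A1 - h A2 - h (A3 ∪ A4) - h (A1 ∪ A2 ∪ A3) - h (A1 ∪ A2 ∪ A4)

/-- `h` is Ingletonian if all Ingleton expressions are nonnegative. -/
def IsIngletonian {X : Type} [DecidableEq X] (h : Finset X → ℝ) : Prop :=
  ∀ A1 A2 A3 A4 : Finset X, 0 ≤ ingletonJ h A1 A2 A3 A4

/-- The convex cone generated by a set `S` of rank functions (viewed as points of
`ℝ^{2^|X|}`): all finite nonnegative combinations of elements of `S`. -/
def coneHull {X : Type} (S : Set (Finset X → ℝ)) : Set (Finset X → ℝ) :=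
  {x | ∃ (m : ℕ) (c : Fin m → ℝ) (f : Fin m → Finset X → ℝ),
    (∀ i, 0 ≤ c i) ∧ (∀ i, f i ∈ S) ∧ x = ∑ i, c i • f i}

/-- `h` is almost representable: a coordinatewise limit `h = lim_i c_i g_i` with
`c_i > 0` and each `g_i` representable. -/
def AlmostRepresentable {X : Type} (h : Finset X → ℝ) : Prop :=
  ∃ (g : ℕ → Finset X → ℝ) (c : ℕ → ℝ), (∀ i, IsRepresentable (g i)) ∧
    (∀ i, 0 < c i) ∧ ∀ A : Finset X, Tendsto (fun i => c i * g i A) atTop (𝓝 (h A))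

/-- `h` is almost even representable. -/
def AlmostEvenRepresentable {X : Type} (h : Finset X → ℝ) : Prop :=
  ∃ (g : ℕ → Finset X → ℝ) (c : ℕ → ℝ), (∀ i, EvenRepresentable (g i)) ∧
    (∀ i, 0 < c i) ∧ ∀ A : Finset X, Tendsto (fun i => c i * g i A) atTop (𝓝 (h A))

/-- `h` is almost odd representable. -/
def AlmostOddRepresentable {X : Type} (h : Finset X → ℝ) : Prop :=
  ∃ (g : ℕ → Finset X → ℝ) (c : ℕ → ℝ), (∀ i, OddRepresentable (g i)) ∧
    (∀ i, 0 < c i) ∧ ∀ A : Finset X, Tendsto (fun i => c i * g i A) atTop (𝓝 (h A))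

/-- `h` is cc-representable: it lies in the closure of the convex cone generated by
the set `Υ[X]` of representable rank functions on `X`. -/
def CcRepresentable {X : Type} (h : Finset X → ℝ) : Prop :=
  h ∈ closure (coneHull {g : Finset X → ℝ | IsRepresentable g})

/-- A matroid: an integer-valued polymatroid with `h(A) ≤ |A|`. -/
def IsIntMatroid {X : Type} [DecidableEq X] (h : Finset X → ℝ) : Prop :=
  IsPolymatroid h ∧ (∀ A : Finset X, ∃ z : ℤ, h A = (z : ℝ)) ∧ ∀ A : Finset X, h A ≤ A.card

/-- A circuit of a matroid: a minimal dependent set. -/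
def IsCircuit {X : Type} (h : Finset X → ℝ) (C : Finset X) : Prop :=
  h C < C.card ∧ ∀ D : Finset X, D ⊂ C → h D = D.card

/-- A connected matroid: every pair of distinct elements lies in a common circuit. -/
def IsConnectedMatroid {X : Type} [DecidableEq X] (h : Finset X → ℝ) : Prop :=
  IsIntMatroid h ∧ ∀ x y : X, x ≠ y → ∃ C : Finset X, IsCircuit h C ∧ x ∈ C ∧ y ∈ C


section AuxLemmas1
open TensorProduct

lemma exists_avoid {F W : Type*} [Field F] [Fintype F] [AddCommGroup W] [Module F W]
    [FiniteDimensional F W] (s : Finset (Submodule F W)) (hs : ∀ p ∈ s, p ≠ ⊤)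
    (hcard : s.card ≤ Fintype.card F) : ∃ v : W, ∀ p ∈ s, v ∉ p := by
  classical
  rcases s.eq_empty_or_nonempty with rfl | hne
  · exact ⟨0, by simp⟩
  haveI : Finite W := Module.finite_of_finite F
  haveI : Fintype W := Fintype.ofFinite W
  have hnt : Nontrivial W := by
    by_contra hn
    rw [not_nontrivial_iff_subsingleton] at hn
    obtain ⟨p, hp⟩ := hne
    exact hs p hp (Subsingleton.elim _ _)
  set q := Fintype.card F with hq
  set d := finrank F W with hd
  have hd1 : 1 ≤ d := Module.finrank_pos
  have hq2 : 2 ≤ q := Fintype.one_lt_card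
  set B : Finset W := s.biUnion (fun p => Set.toFinset (p : Set W)) with hB
  have key : ∀ p ∈ s, (Set.toFinset (p : Set W)).card ≤ q ^ (d - 1) := by
    intro p hp
    have h1 : (Set.toFinset (p : Set W)).card = Fintype.card p := by
      simp [Set.toFinset_card]
    have h2 : Fintype.card p = q ^ finrank F p := card_eq_pow_finrank
    have h3 : finrank F p ≤ d - 1 := by
      have := Submodule.finrank_lt (K := F) (hs p hp)
      omega
    calc (Set.toFinset (p : Set W)).card = q ^ finrank F p := by rw [h1, h2]
    _ ≤ q ^ (d - 1) := Nat.pow_le_pow_right (by omega) h3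
  have hBsub : B.erase 0 ⊆ s.biUnion (fun p => (Set.toFinset (p : Set W)).erase 0) := by
    intro x hx
    rw [Finset.mem_erase] at hx
    obtain ⟨hx0, hxB⟩ := hx
    rw [Finset.mem_biUnion] at hxB ⊢
    obtain ⟨p, hp, hxp⟩ := hxB
    exact ⟨p, hp, Finset.mem_erase.mpr ⟨hx0, hxp⟩⟩
  have hcard2 : (B.erase 0).card ≤ s.card * (q ^ (d - 1) - 1) := by
    calc (B.erase 0).card ≤ (s.biUnion (fun p => (Set.toFinset (p : Set W)).erase 0)).card :=
      Finset.card_le_card hBsub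
    _ ≤ ∑ p ∈ s, ((Set.toFinset (p : Set W)).erase 0).card := Finset.card_biUnion_le
    _ ≤ ∑ p ∈ s, (q ^ (d - 1) - 1) := Finset.sum_le_sum (fun p hp => by
        have h0 : (0 : W) ∈ Set.toFinset (p : Set W) := by simp
        rw [Finset.card_erase_of_mem h0]
        have := key p hp
        omega)
    _ = s.card * (q ^ (d - 1) - 1) := by rw [Finset.sum_const, smul_eq_mul]
  have hBcard : B.card < Fintype.card W := by
    have hsub : B ⊆ insert 0 (B.erase 0) := by
      intro x hx
      by_cases hx0 : x = 0
      · simp [hx0]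
      · exact Finset.mem_insert_of_mem (Finset.mem_erase.mpr ⟨hx0, hx⟩)
    have h1 : B.card ≤ 1 + (B.erase 0).card := by
      calc B.card ≤ (insert 0 (B.erase 0)).card := Finset.card_le_card hsub
      _ ≤ 1 + (B.erase 0).card := by
          have := Finset.card_insert_le (0 : W) (B.erase 0); omega
    have hW : Fintype.card W = q ^ d := card_eq_pow_finrank
    have hqd : q ^ d = q ^ (d - 1) * q := by
      rw [← pow_succ]
      congr 1
      omega
    have hq1 : 1 ≤ q ^ (d - 1) := Nat.one_le_pow _ _ (by omega)
    obtain ⟨b, hb⟩ : ∃ b, q ^ (d - 1) = b + 1 := ⟨q ^ (d-1) - 1, by omega⟩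
    have this2 : s.card * (q ^ (d - 1) - 1) ≤ q * (q ^ (d - 1) - 1) :=
      Nat.mul_le_mul_right _ hcard
    rw [hb] at hqd this2 hcard2
    simp only [Nat.add_sub_cancel] at this2 hcard2
    have h3 : B.card ≤ 1 + q * b := by
      calc B.card ≤ 1 + (B.erase 0).card := h1
      _ ≤ 1 + s.card * b := by omega
      _ ≤ 1 + q * b := by omega
    rw [hW, hqd]
    nlinarith
  have : ∃ v : W, v ∉ B := by
    by_contra hv
    push_neg at hv
    have : B = Finset.univ := Finset.eq_univ_iff_forall.mpr hv
    rw [this, Finset.card_univ] at hBcard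
    omega
  obtain ⟨v, hv⟩ := this
  refine ⟨v, fun p hp hvp => hv ?_⟩
  rw [Finset.mem_biUnion]
  exact ⟨p, hp, by simpa using hvp⟩

lemma exists_generic_subspace {F W : Type*} [Field F] [Fintype F] [AddCommGroup W] [Module F W]
    [FiniteDimensional F W] {ι : Type*} [Fintype ι] (S : ι → Submodule F W)
    (hF : Fintype.card ι + 1 ≤ Fintype.card F) :
    ∀ j, j ≤ finrank F W → ∃ K : Submodule F W, finrank F ↥K = j ∧
      ∀ i, finrank F ↥(S i ⊓ K) = finrank F ↥(S i) + j - finrank F W := by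
  classical
  set d := finrank F W with hd
  intro j
  induction j with
  | zero =>
    intro _
    refine ⟨⊥, finrank_bot F W, fun i => ?_⟩
    rw [inf_bot_eq, finrank_bot]
    have := Submodule.finrank_le (S i)
    omega
  | succ j ih =>
    intro hj1
    obtain ⟨K, hKrank, hKinf⟩ := ih (by omega)
    have hjd : j < d := by omega
    have hKne : K ≠ ⊤ := by
      intro h
      rw [h, finrank_top] at hKrank
      omega
    set A : Finset (Submodule F W) :=
      ((Finset.univ.image (fun i => S i ⊔ K)).filter (fun p => p ≠ ⊤)) ∪ {K} with hA
    have hAne : ∀ p ∈ A, p ≠ ⊤ := by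
      intro p hp
      rw [hA, Finset.mem_union, Finset.mem_filter, Finset.mem_singleton] at hp
      rcases hp with ⟨_, h⟩ | rfl
      · exact h
      · exact hKne
    have hAcard : A.card ≤ Fintype.card F := by
      calc A.card ≤ ((Finset.univ.image (fun i => S i ⊔ K)).filter (fun p => p ≠ ⊤)).card + 1 := by
            have := Finset.card_union_le
              ((Finset.univ.image (fun i => S i ⊔ K)).filter (fun p => p ≠ ⊤)) ({K} : Finset (Submodule F W))
            simpa [hA] using this
      _ ≤ (Finset.univ.image (fun i => S i ⊔ K)).card + 1 := by
            have := Finset.card_filter_le (Finset.univ.image (fun i => S i ⊔ K)) (fun p => p ≠ ⊤)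
            omega
      _ ≤ Fintype.card ι + 1 := by
            have := Finset.card_image_le (s := (Finset.univ : Finset ι)) (f := fun i => S i ⊔ K)
            simp at this
            omega
      _ ≤ Fintype.card F := hF
    obtain ⟨v, hv⟩ := exists_avoid A hAne hAcard
    have hvK : v ∉ K := hv K (by simp [hA])
    have hv0 : v ≠ 0 := fun h => hvK (h ▸ K.zero_mem)
    set K' : Submodule F W := K ⊔ (F ∙ v) with hK'
    have hinfbot : K ⊓ (F ∙ v) = ⊥ := by
      rw [← disjoint_iff]
      exact (Submodule.disjoint_span_singleton' hv0).mpr hvK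
    have hK'rank : finrank F ↥K' = j + 1 := by
      have := Submodule.finrank_sup_add_finrank_inf_eq K (F ∙ v)
      rw [hinfbot, finrank_bot, finrank_span_singleton hv0] at this
      rw [hK']
      omega
    refine ⟨K', hK'rank, fun i => ?_⟩
    have hle : finrank F ↥(S i) ≤ d := Submodule.finrank_le (S i)
    have heq' : finrank F ↥(S i ⊔ K') + finrank F ↥(S i ⊓ K') = finrank F ↥(S i) + (j + 1) := by
      have := Submodule.finrank_sup_add_finrank_inf_eq (S i) K'
      rw [hK'rank] at this
      exact this
    have heq : finrank F ↥(S i ⊔ K) + finrank F ↥(S i ⊓ K) = finrank F ↥(S i) + j := by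
      have := Submodule.finrank_sup_add_finrank_inf_eq (S i) K
      rw [hKrank] at this
      exact this
    by_cases htop : S i ⊔ K = ⊤
    · have htop' : S i ⊔ K' = ⊤ := by
        rw [eq_top_iff, ← htop]
        exact sup_le_sup_left le_sup_left _
      rw [htop, finrank_top] at heq
      rw [htop', finrank_top] at heq'
      rw [hKinf i] at heq
      omega
    · have hvSK : v ∉ S i ⊔ K := hv _ (by
        rw [hA, Finset.mem_union, Finset.mem_filter]
        left
        exact ⟨Finset.mem_image_of_mem _ (Finset.mem_univ i), htop⟩)
      have hinf_eq : S i ⊓ K' = S i ⊓ K := by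
        refine le_antisymm ?_ (inf_le_inf_left _ le_sup_left)
        intro x hx
        rw [Submodule.mem_inf] at hx ⊢
        obtain ⟨hxS, hxK'⟩ := hx
        rw [hK', Submodule.mem_sup] at hxK'
        obtain ⟨y, hy, z, hz, rfl⟩ := hxK'
        rw [Submodule.mem_span_singleton] at hz
        obtain ⟨a, rfl⟩ := hz
        rcases eq_or_ne a 0 with rfl | ha
        · exact ⟨hxS, by simpa using hy⟩
        · exfalso
          apply hvSK
          have h1 : y + a • v ∈ S i ⊔ K := Submodule.mem_sup_left hxS
          have h2 : y ∈ S i ⊔ K := Submodule.mem_sup_right hy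
          have h3 : a • v ∈ S i ⊔ K := by
            have := Submodule.sub_mem _ h1 h2
            simpa using this
          have := Submodule.smul_mem _ a⁻¹ h3
          simpa [ha] using this
      rw [hinf_eq]
      have hlt : finrank F ↥(S i) + j < d := by
        by_contra hge
        push_neg at hge
        have h4 : finrank F ↥(S i ⊓ K) = finrank F ↥(S i) + j - d := hKinf i
        have h5 : finrank F ↥(S i ⊔ K) = d := by omega
        exact htop (Submodule.eq_top_of_finrank_eq h5)
      rw [hKinf i]
      omega

lemma finrank_map_mkQ {F W : Type*} [Field F] [AddCommGroup W] [Module F W]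
    [FiniteDimensional F W] (K S : Submodule F W) :
    finrank F ↥(S.map K.mkQ) = finrank F ↥S - finrank F ↥(S ⊓ K) := by
  classical
  set f : ↥S →ₗ[F] W ⧸ K := K.mkQ.comp S.subtype with hf
  have hrange : LinearMap.range f = S.map K.mkQ := by
    rw [hf, LinearMap.range_comp, Submodule.range_subtype]
  have hker : LinearMap.ker f = (K.comap S.subtype) := by
    rw [hf, LinearMap.ker_comp, Submodule.ker_mkQ]
  have hkerrank : finrank F ↥(LinearMap.ker f) = finrank F ↥(S ⊓ K) := by
    rw [hker, ← Submodule.map_comap_subtype]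
    exact (Submodule.equivMapOfInjective S.subtype (Submodule.injective_subtype S)
      (K.comap S.subtype)).finrank_eq
  have := LinearMap.finrank_range_add_finrank_ker f
  rw [hrange, hkerrank] at this
  omega

-- big field extension
lemma exists_big_field (F : Type) [Field F] [Fintype F] (N : ℕ) :
    ∃ (F' : Type) (_i1 : Field F') (_i2 : Fintype F'),
      Nonempty (F →+* F') ∧ N ≤ Fintype.card F' := by
  classical
  set q := Fintype.card F with hq
  have hq2 : 2 ≤ q := Fintype.one_lt_card
  set p := ringChar F with hp
  haveI hfact : Fact p.Prime := ⟨CharP.char_is_prime F p⟩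
  set k := N + 1 with hk
  have hdvd : p ∣ q ^ k := by
    obtain ⟨n, hpn, hcard⟩ := FiniteField.card F p
    rw [hq, hcard]
    exact dvd_pow (dvd_pow_self p n.2.ne') (by positivity)
  set g : Polynomial F := Polynomial.X ^ (q ^ k) - Polynomial.X with hg
  have hqk1 : 1 < q ^ k := Nat.one_lt_pow (by omega) (by omega)
  set F' := Polynomial.SplittingField g with hF'
  haveI : FiniteDimensional F F' :=
    inferInstanceAs (FiniteDimensional F g.SplittingField)
  haveI : Finite F' := Module.finite_of_finite F
  haveI : Fintype F' := Fintype.ofFinite F'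
  refine ⟨F', inferInstance, inferInstance, ⟨algebraMap F F'⟩, ?_⟩
  have hsep : g.Separable := galois_poly_separable p (q ^ k) hdvd
  have hcardroot : Fintype.card (g.rootSet F') = g.natDegree :=
    Polynomial.card_rootSet_eq_natDegree hsep (Polynomial.SplittingField.splits g)
  have hdeg : g.natDegree = q ^ k := FiniteField.X_pow_card_sub_X_natDegree_eq F hqk1
  have hle : Fintype.card (g.rootSet F') ≤ Fintype.card F' :=
    Fintype.card_le_of_injective (fun x => (x : F')) Subtype.val_injective
  have hNk : N ≤ q ^ k := by
    have h1 := Nat.lt_two_pow_self (n := N)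
    have h2 : (2:ℕ) ^ N ≤ 2 ^ k := Nat.pow_le_pow_right (by omega) (by omega)
    have h3 : (2:ℕ) ^ k ≤ q ^ k := Nat.pow_le_pow_left (by omega) k
    omega
  omega

variable {F F' W : Type*} [Field F] [Field F'] [Algebra F F'] [AddCommGroup W] [Module F W]

lemma baseChange_sup (p q : Submodule F W) :
    (p ⊔ q).baseChange F' = p.baseChange F' ⊔ q.baseChange F' := by
  apply le_antisymm
  · rw [Submodule.baseChange_eq_span, Submodule.span_le]
    rintro x hx
    rw [SetLike.mem_coe, Submodule.mem_map] at hx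
    obtain ⟨m, hm, rfl⟩ := hx
    rw [Submodule.mem_sup] at hm
    obtain ⟨a, ha, b, hb, rfl⟩ := hm
    rw [SetLike.mem_coe, map_add]
    exact Submodule.add_mem _
      (Submodule.mem_sup_left (Submodule.tmul_mem_baseChange_of_mem 1 ha))
      (Submodule.mem_sup_right (Submodule.tmul_mem_baseChange_of_mem 1 hb))
  · apply sup_le <;>
    · rw [Submodule.baseChange_eq_span, Submodule.span_le]
      rintro x hx
      rw [SetLike.mem_coe, Submodule.mem_map] at hx
      obtain ⟨m, hm, rfl⟩ := hx
      rw [Submodule.baseChange_eq_span]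
      apply Submodule.subset_span
      exact ⟨m, by simp [Submodule.mem_sup_left hm, Submodule.mem_sup_right hm], rfl⟩

lemma finrank_baseChange' (p : Submodule F W) [FiniteDimensional F W] :
    finrank F' ↥(p.baseChange F') = finrank F ↥p := by
  classical
  set k := finrank F ↥p with hk
  let b : Basis (Fin k) F ↥p := finBasis F ↥p
  set g : Fin k → F' ⊗[F] W := fun i => (1 : F') ⊗ₜ[F] (p.subtype (b i)) with hgdef
  have hcomp : ⇑(TensorProduct.mk F F' W 1) ∘ (fun i => p.subtype (b i)) = g := rfl
  have hspanp : Submodule.span F (Set.range (fun i => p.subtype (b i))) = p := by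
    have h1 : Submodule.span F (Set.range b) = ⊤ := b.span_eq
    have h2 : Submodule.span F (Set.range (fun i => p.subtype (b i))) =
        Submodule.map p.subtype (Submodule.span F (Set.range b)) := by
      rw [Submodule.map_span, ← Set.range_comp]
      rfl
    rw [h2, h1, Submodule.map_top, Submodule.range_subtype]
  have hbc : p.baseChange F' = Submodule.span F' (Set.range g) := by
    apply le_antisymm
    · rw [Submodule.baseChange_eq_span, Submodule.span_le]
      rintro x hx
      rw [SetLike.mem_coe, Submodule.mem_map] at hx
      obtain ⟨m, hm, rfl⟩ := hx
      rw [← hspanp] at hm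
      have h3 : (TensorProduct.mk F F' W 1) m ∈ Submodule.span F (Set.range g) := by
        have h4 := Submodule.mem_map_of_mem (f := TensorProduct.mk F F' W 1) hm
        rw [Submodule.map_span, ← Set.range_comp, hcomp] at h4
        exact h4
      exact Submodule.span_le_restrictScalars F F' (Set.range g) h3
    · rw [Submodule.span_le]
      rintro x ⟨i, rfl⟩
      exact Submodule.tmul_mem_baseChange_of_mem 1 (b i).2
  have hindep : LinearIndependent F' g := by
    have hbb : LinearIndependent F' (b.baseChange F') := (b.baseChange F').linearIndependent
    have hinj : Function.Injective (p.subtype.baseChange F') := by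
      rw [LinearMap.baseChange_eq_ltensor]
      exact Module.Flat.lTensor_preserves_injective_linearMap p.subtype
        (Submodule.injective_subtype p)
    have := hbb.map' (p.subtype.baseChange F') (LinearMap.ker_eq_bot.mpr hinj)
    convert this using 1
    funext i
    rw [Function.comp_apply, Basis.baseChange_apply, LinearMap.baseChange_tmul]
    all_goals rfl
  rw [hbc, finrank_span_eq_card hindep, Fintype.card_fin]

end AuxLemmas1

section AuxLemmas2
open TensorProduct

lemma trunc_representable {Y : Type} [Fintype Y] (g : Finset Y → ℝ)
    (hg : IsRepresentable g) (m : ℕ) :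
    IsRepresentable (fun A : Finset Y => min (g A) (m : ℝ)) := by
  classical
  obtain ⟨r⟩ := hg
  letI := r.fieldF; letI := r.fintypeF; letI := r.addCommGroupW
  letI := r.moduleW; letI := r.finiteDimensionalW
  obtain ⟨F', i1, i2, ⟨f⟩, hbig⟩ :=
    exists_big_field r.F (Fintype.card (Finset Y) + 1)
  letI := i1
  letI := i2
  letI : Algebra r.F F' := f.toAlgebra
  set W' := F' ⊗[r.F] r.W with hW'
  haveI : Module.Finite F' W' := Module.Finite.base_change r.F F' r.W
  set V' : Y → Submodule F' W' := fun y => (r.V y).baseChange F' with hV'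
  have hsup : ∀ A : Finset Y, A.sup V' = (A.sup r.V).baseChange F' := by
    intro A
    rw [Finset.comp_sup_eq_sup_comp (fun p : Submodule r.F r.W => p.baseChange F')
      (fun x y => baseChange_sup x y) (Submodule.baseChange_bot F')]
    rfl
  have hdim : ∀ A : Finset Y, finrank F' ↥(A.sup V') = finrank r.F ↥(A.sup r.V) := by
    intro A
    rw [hsup A, finrank_baseChange']
  set d := finrank F' W' with hd
  by_cases hm : d ≤ m
  · -- no truncation needed
    refine ⟨⟨F', W', V', fun A => ?_⟩⟩
    have h1 : g A = (finrank F' ↥(A.sup V') : ℝ) := by rw [hdim A]; exact r.rank_eq A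
    have h2 : finrank F' ↥(A.sup V') ≤ d := Submodule.finrank_le _
    rw [h1, min_eq_left (by exact_mod_cast le_trans h2 hm)]
  · push_neg at hm
    obtain ⟨K, hKrank, hKinf⟩ := exists_generic_subspace (fun A : Finset Y => A.sup V')
      hbig (d - m) (by omega)
    refine ⟨⟨F', W' ⧸ K, fun y => (V' y).map K.mkQ, fun A => ?_⟩⟩
    have hmapsup : A.sup (fun y => (V' y).map K.mkQ) = (A.sup V').map K.mkQ := by
      rw [Finset.comp_sup_eq_sup_comp (fun p : Submodule F' W' => p.map K.mkQ)
        (fun x y => Submodule.map_sup x y _) (Submodule.map_bot _)]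
      rfl
    have hSle : finrank F' ↥(A.sup V') ≤ d := Submodule.finrank_le _
    have h2 : finrank F' ↥((A.sup V').map K.mkQ) = min (finrank F' ↥(A.sup V')) m := by
      rw [finrank_map_mkQ K (A.sup V'), hKinf A]
      omega
    have h1 : g A = (finrank F' ↥(A.sup V') : ℝ) := by rw [hdim A]; exact r.rank_eq A
    rw [hmapsup, h2, h1]
    rw [Nat.cast_min]

-- scaling
lemma coneHull_smul {Y : Type} {S : Set (Finset Y → ℝ)} {x : Finset Y → ℝ}
    (hx : x ∈ coneHull S) {r : ℝ} (hr : 0 ≤ r) : r • x ∈ coneHull S := by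
  obtain ⟨m, c, f, hc, hf, rfl⟩ := hx
  refine ⟨m, fun i => r * c i, f, fun i => mul_nonneg hr (hc i), hf, ?_⟩
  rw [Finset.smul_sum]
  simp [smul_smul]

lemma mem_coneHull_of_rep {Y : Type} (f : Finset Y → ℝ) (hf : IsRepresentable f) :
    f ∈ coneHull {g : Finset Y → ℝ | IsRepresentable g} := by
  refine ⟨1, fun _ => 1, fun _ => f, fun _ => zero_le_one, fun _ => hf, ?_⟩
  simp

-- real truncation of representable is in coneHull
lemma trunc_mem_cone {Y : Type} [Fintype Y] (g : Finset Y → ℝ) (hg : IsRepresentable g)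
    {s : ℝ} (hs : 0 ≤ s) :
    (fun A : Finset Y => min (g A) s) ∈ coneHull {f : Finset Y → ℝ | IsRepresentable f} := by
  classical
  set a := ⌊s⌋₊ with ha
  have has : (a : ℝ) ≤ s := Nat.floor_le hs
  have hs1 : s < (a : ℝ) + 1 := Nat.lt_floor_add_one s
  set lam := s - (a : ℝ) with hlam
  have hlam0 : 0 ≤ lam := by simp [hlam]; linarith
  have hlam1 : lam ≤ 1 := by simp [hlam]; linarith
  have hnat : ∀ A : Finset Y, ∃ k : ℕ, g A = (k : ℝ) := by
    obtain ⟨r⟩ := hg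
    exact fun A => ⟨_, r.rank_eq A⟩
  refine ⟨2, ![1 - lam, lam], ![fun A => min (g A) (a : ℝ), fun A => min (g A) ((a + 1 : ℕ) : ℝ)],
    ?_, ?_, ?_⟩
  · intro i
    fin_cases i <;> simp <;> linarith
  · intro i
    fin_cases i
    · exact trunc_representable g hg a
    · exact trunc_representable g hg (a + 1)
  · funext A
    obtain ⟨k, hk⟩ := hnat A
    rw [Fin.sum_univ_two]
    simp only [Matrix.cons_val_zero, Matrix.cons_val_one, Matrix.head_cons, Pi.add_apply,
      Pi.smul_apply, smul_eq_mul]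
    rcases le_or_gt k a with hka | hka
    · have h1 : (k : ℝ) ≤ (a : ℝ) := by exact_mod_cast hka
      rw [hk, min_eq_left (le_trans h1 has), min_eq_left h1,
        min_eq_left (by push_cast; linarith)]
      ring
    · have h1 : (a : ℝ) + 1 ≤ (k : ℝ) := by exact_mod_cast hka
      rw [hk, min_eq_right (by linarith), min_eq_right (by linarith),
        min_eq_right (by push_cast; linarith)]
      push_cast
      ring

-- pullback of a representable rank function along subsets V : Fin n → Finset X
lemma pullback_rep {n : ℕ} {X : Type} [DecidableEq X] (V : Fin n → Finset X)
    (f : Finset X → ℝ) (hf : IsRepresentable f) :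
    IsRepresentable (fun α : Finset (Fin n) => f (α.sup V)) := by
  obtain ⟨r⟩ := hf
  letI := r.fieldF; letI := r.fintypeF; letI := r.addCommGroupW
  letI := r.moduleW; letI := r.finiteDimensionalW
  refine ⟨⟨r.F, r.W, fun i => (V i).sup r.V, fun α => ?_⟩⟩
  have hsup : α.sup (fun i => (V i).sup r.V) = (α.sup V).sup r.V := by
    induction α using Finset.induction_on with
    | empty => simp
    | insert x s hx ih =>
      rw [Finset.sup_insert, Finset.sup_insert, ih, ← Finset.sup_union]
      rfl
  rw [hsup]
  exact r.rank_eq _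

end AuxLemmas2

/-- generalization: fix `n` and coefficients `c_α` (`α ⊆ {1,…,n}`) such
that `∑_α c_α · dim⟨U_i : i∈α⟩ ≥ 0` for every choice of subspaces `U_1, …, U_n` of every
finite-dimensional vector space over every finite field, and suppose every rank function
in the closure of the convex cone generated by `Υ[Fin n]` (the `n`-element ground set)
is almost representable. Then for every finite ground set `X`, every cc-representable
polymatroid `h` on `X`, every `0 ≤ ε ≤ h(X)` and all subsets `V_1, …, V_n ⊆ X`, the
ε-perturbation `g(A) = min(h(A), h(X) − ε)` satisfies
`∑_α c_α · g(⋃_{i∈α} V_i) ≥ 0`. -/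
theorem perturbation_satisfies_valid_rank_inequalities
    (n : ℕ) (c : Finset (Fin n) → ℝ)
    (hvalid : ∀ (F : Type) [Field F] [Fintype F]
        (W : Type) [AddCommGroup W] [Module F W] [FiniteDimensional F W]
        (U : Fin n → Submodule F W),
        0 ≤ ∑ α : Finset (Fin n), c α * (Module.finrank F ↥(α.sup U) : ℝ))
    (halmost : ∀ g : Finset (Fin n) → ℝ,
        g ∈ closure (coneHull {f : Finset (Fin n) → ℝ | IsRepresentable f}) →
        AlmostRepresentable g)
    (X : Type) [Fintype X] [DecidableEq X] (h : Finset X → ℝ)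
    (hpoly : IsPolymatroid h) (hcc : CcRepresentable h)
    (ε : ℝ) (hε0 : 0 ≤ ε) (hε1 : ε ≤ h Finset.univ)
    (V : Fin n → Finset X) :
    0 ≤ ∑ α : Finset (Fin n), c α * min (h (α.sup V)) (h Finset.univ - ε) := by

  classical
  set t : ℝ := h Finset.univ - ε with ht
  have ht0 : 0 ≤ t := by rw [ht]; linarith
  set Υ : Set (Finset (Fin n) → ℝ) := {f : Finset (Fin n) → ℝ | IsRepresentable f} with hΥ
  -- the linear functional
  set L : (Finset (Fin n) → ℝ) → ℝ := fun g => ∑ α : Finset (Fin n), c α * g α with hL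
  have hLcont : Continuous L := by
    apply continuous_finset_sum
    exact fun α _ => continuous_const.mul (continuous_apply α)
  -- L is nonnegative on representables
  have hLrep : ∀ f ∈ Υ, 0 ≤ L f := by
    rintro f hf
    obtain ⟨r⟩ := hf
    letI := r.fieldF; letI := r.fintypeF; letI := r.addCommGroupW
    letI := r.moduleW; letI := r.finiteDimensionalW
    have := hvalid r.F r.W r.V
    rw [hL]
    have heq : ∀ α : Finset (Fin n), f α = (Module.finrank r.F ↥(α.sup r.V) : ℝ) := r.rank_eq
    calc (0:ℝ) ≤ ∑ α : Finset (Fin n), c α * (Module.finrank r.F ↥(α.sup r.V) : ℝ) := this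
    _ = ∑ α : Finset (Fin n), c α * f α := by
        apply Finset.sum_congr rfl
        intro α _
        rw [heq α]
  -- L nonneg on coneHull
  have hLcone : ∀ x ∈ coneHull Υ, 0 ≤ L x := by
    rintro x ⟨m, cc, f, hcc, hfS, rfl⟩
    have key : L (∑ i, cc i • f i) = ∑ i, cc i * L (f i) := by
      show ∑ α : Finset (Fin n), c α * (∑ i, cc i • f i) α = _
      simp only [Finset.sum_apply, Pi.smul_apply, smul_eq_mul, Finset.mul_sum]
      rw [Finset.sum_comm]
      apply Finset.sum_congr rfl
      intro i _
      show _ = cc i * L (f i)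
      simp only [hL, Finset.mul_sum]
      apply Finset.sum_congr rfl
      intro α _
      ring
    rw [key]
    exact Finset.sum_nonneg fun i _ => mul_nonneg (hcc i) (hLrep _ (hfS i))
  -- L nonneg on closure of coneHull
  have hLclosure : ∀ x ∈ closure (coneHull Υ), 0 ≤ L x := by
    intro x hx
    have hclosed : IsClosed {y : Finset (Fin n) → ℝ | 0 ≤ L y} :=
      isClosed_le continuous_const hLcont
    exact closure_minimal hLcone hclosed hx
  -- pullback of h lies in closure of cone
  set Φ : (Finset X → ℝ) → (Finset (Fin n) → ℝ) := fun g α => g (α.sup V) with hΦ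
  have hΦcont : Continuous Φ := continuous_pi fun α => continuous_apply _
  have hΦcone : ∀ x ∈ coneHull {g : Finset X → ℝ | IsRepresentable g}, Φ x ∈ coneHull Υ := by
    rintro x ⟨m, cc, f, hcc, hfS, rfl⟩
    refine ⟨m, cc, fun i => Φ (f i), hcc, fun i => pullback_rep V (f i) (hfS i), ?_⟩
    funext α
    simp only [hΦ, Finset.sum_apply, Pi.smul_apply, smul_eq_mul]
  have hh' : Φ h ∈ closure (coneHull Υ) := by
    have h1 : Φ h ∈ Φ '' closure (coneHull {g : Finset X → ℝ | IsRepresentable g}) :=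
      Set.mem_image_of_mem Φ hcc
    have h2 : Φ '' closure (coneHull {g : Finset X → ℝ | IsRepresentable g})
        ⊆ closure (Φ '' coneHull {g : Finset X → ℝ | IsRepresentable g}) :=
      image_closure_subset_closure_image hΦcont
    have h3 : closure (Φ '' coneHull {g : Finset X → ℝ | IsRepresentable g})
        ⊆ closure (coneHull Υ) :=
      closure_mono (Set.image_subset_iff.mpr fun x hx => hΦcone x hx)
    exact h3 (h2 h1)
  -- almost representable
  obtain ⟨gseq, cseq, hgrep, hcpos, htend⟩ := halmost (Φ h) hh'
  -- truncated approximations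
  set Fk : ℕ → Finset (Fin n) → ℝ := fun k α => min (cseq k * gseq k α) t with hFk
  have hFkmem : ∀ k, Fk k ∈ coneHull Υ := by
    intro k
    have h1 : (fun α : Finset (Fin n) => min (gseq k α) (t / cseq k)) ∈ coneHull Υ :=
      trunc_mem_cone _ (hgrep k) (div_nonneg ht0 (hcpos k).le)
    have h2 := coneHull_smul h1 (hcpos k).le
    have h3 : cseq k • (fun α : Finset (Fin n) => min (gseq k α) (t / cseq k)) = Fk k := by
      funext α
      rw [hFk]
      simp only [Pi.smul_apply, smul_eq_mul]
      rw [mul_min_of_nonneg _ _ (hcpos k).le, mul_div_cancel₀ _ (hcpos k).ne']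
    rw [h3] at h2
    exact h2
  have hFtend : Tendsto Fk atTop (𝓝 (fun α : Finset (Fin n) => min (Φ h α) t)) := by
    rw [tendsto_pi_nhds]
    intro α
    exact (htend α).min tendsto_const_nhds
  have hmem : (fun α : Finset (Fin n) => min (Φ h α) t) ∈ closure (coneHull Υ) := by
    apply mem_closure_of_tendsto hFtend
    exact Eventually.of_forall fun k => hFkmem k
  exact hLclosure _ hmem
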